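/- For n ≥ 2, the quandle U(1,n) satisfies x * y_0 = x but y_0 * x ≠ y_0; consequently U(1,n) is not isomorphic to any (G,A)-quandle. -/

import Mathlib

open Quandles

namespace GA

variable {G : Type*} [Group G]

/-- The equivalence relation on `A × G`: `(a, gh) ~ (a, h)` for `g ∈ C_G(a)`,
i.e. `(a,u) ~ (b,v)` iff `a = b` and `u * v⁻¹` centralizes `a`. -/
def rel (A : Set G) (p q : A × G) : Prop :=
  p.1 = q.1 ∧ p.2 * q.2⁻¹ ∈ Subgroup.centralizer ({(p.1 : G)} : Set G)

theorem rel_equiv (A : Set G) : Equivalence (rel A) := by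
  constructor
  · intro p
    exact ⟨rfl, by simpa using (Subgroup.centralizer ({(p.1 : G)} : Set G)).one_mem⟩
  · rintro p q ⟨h1, h2⟩
    refine ⟨h1.symm, ?_⟩
    have := (Subgroup.centralizer ({(p.1 : G)} : Set G)).inv_mem h2
    simpa [h1] using this
  · rintro p q r ⟨h1, h2⟩ ⟨h1', h2'⟩
    refine ⟨h1.trans h1', ?_⟩
    have := (Subgroup.centralizer ({(p.1 : G)} : Set G)).mul_mem h2 (by rw [h1]; exact h2')
    simpa [mul_assoc] using this

instance setoid (A : Set G) : Setoid (A × G) := ⟨rel A, rel_equiv A⟩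

/-- The `(G,A)`-quandle as a set: the quotient of `A × G` by `(a,gh) ~ (a,h)`, `g ∈ C_G(a)`. -/
def Q (G : Type*) [Group G] (A : Set G) : Type _ := Quotient (setoid A)

/-- The class of `(a,u)` in `Q(G,A)`. -/
def mk {A : Set G} (a : A) (u : G) : Q G A := Quotient.mk (setoid A) (a, u)

/-- representative-level operation `(a,u) * (b,v) = (a, u v⁻¹ b v)`,
written as a left action of `(b,v)` on `(a,u)`. -/
def pop {A : Set G} (x y : A × G) : A × G := (y.1, y.2 * x.2⁻¹ * (x.1 : G) * x.2)

/-- representative-level inverse operation `(a,u) *⁻¹ (b,v) = (a, u v⁻¹ b⁻¹ v)`. -/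
def pinv {A : Set G} (x y : A × G) : A × G := (y.1, y.2 * x.2⁻¹ * (x.1 : G)⁻¹ * x.2)

theorem centralizer_mem_iff {a u : G} : u ∈ Subgroup.centralizer ({a} : Set G) ↔ u * a = a * u := by
  rw [Subgroup.mem_centralizer_singleton_iff]

theorem conj_indep {b v d : G} (h : d * b = b * d) : ((d * v))⁻¹ * b * (d * v) = v⁻¹ * b * v := by
  have h' : d⁻¹ * b * d = b := by
    rw [mul_assoc, ← h]; group
  calc (d * v)⁻¹ * b * (d * v) = v⁻¹ * (d⁻¹ * b * d) * v := by group
    _ = v⁻¹ * b * v := by rw [h']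

theorem pop_well {A : Set G} : ∀ (x₁ y₁ x₂ y₂ : A × G), rel A x₁ x₂ → rel A y₁ y₂ →
    rel A (pop x₁ y₁) (pop x₂ y₂) := by
  rintro ⟨b₁, v₁⟩ ⟨a₁, u₁⟩ ⟨b₂, v₂⟩ ⟨a₂, u₂⟩ ⟨hb, hv⟩ ⟨ha, hu⟩
  refine ⟨ha, ?_⟩
  simp only [pop]
  rw [centralizer_mem_iff] at hv hu ⊢
  have hb' : (b₁ : G) = (b₂ : G) := congrArg _ hb
  have key : v₁⁻¹ * (b₁ : G) * v₁ = v₂⁻¹ * (b₂ : G) * v₂ := by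
    conv_lhs => rw [show v₁ = (v₁ * v₂⁻¹) * v₂ by group, hb']
    exact conj_indep (by rw [← hb']; exact hv)
  have heq : u₁ * v₁⁻¹ * (b₁:G) * v₁ * (u₂ * v₂⁻¹ * (b₂:G) * v₂)⁻¹ = u₁ * u₂⁻¹ := by
    calc u₁ * v₁⁻¹ * (b₁:G) * v₁ * (u₂ * v₂⁻¹ * (b₂:G) * v₂)⁻¹
        = u₁ * (v₁⁻¹ * (b₁:G) * v₁) * (v₂⁻¹ * (b₂:G) * v₂)⁻¹ * u₂⁻¹ := by group
      _ = u₁ * (v₂⁻¹ * (b₂:G) * v₂) * (v₂⁻¹ * (b₂:G) * v₂)⁻¹ * u₂⁻¹ := by rw [key]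
      _ = u₁ * u₂⁻¹ := by group
  rw [heq]
  exact hu

theorem pinv_well {A : Set G} : ∀ (x₁ y₁ x₂ y₂ : A × G), rel A x₁ x₂ → rel A y₁ y₂ →
    rel A (pinv x₁ y₁) (pinv x₂ y₂) := by
  rintro ⟨b₁, v₁⟩ ⟨a₁, u₁⟩ ⟨b₂, v₂⟩ ⟨a₂, u₂⟩ ⟨hb, hv⟩ ⟨ha, hu⟩
  refine ⟨ha, ?_⟩
  simp only [pinv]
  rw [centralizer_mem_iff] at hv hu ⊢
  have hb' : (b₁ : G) = (b₂ : G) := congrArg _ hb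
  have hvc : (v₁ * v₂⁻¹) * (b₂ : G)⁻¹ = (b₂ : G)⁻¹ * (v₁ * v₂⁻¹) := by
    have : Commute (v₁ * v₂⁻¹) (b₂ : G) := by rw [← hb']; exact hv
    exact this.inv_right
  have key : v₁⁻¹ * (b₁ : G)⁻¹ * v₁ = v₂⁻¹ * (b₂ : G)⁻¹ * v₂ := by
    conv_lhs => rw [show v₁ = (v₁ * v₂⁻¹) * v₂ by group, hb']
    exact conj_indep hvc
  have heq : u₁ * v₁⁻¹ * (b₁:G)⁻¹ * v₁ * (u₂ * v₂⁻¹ * (b₂:G)⁻¹ * v₂)⁻¹ = u₁ * u₂⁻¹ := by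
    calc u₁ * v₁⁻¹ * (b₁:G)⁻¹ * v₁ * (u₂ * v₂⁻¹ * (b₂:G)⁻¹ * v₂)⁻¹
        = u₁ * (v₁⁻¹ * (b₁:G)⁻¹ * v₁) * (v₂⁻¹ * (b₂:G)⁻¹ * v₂)⁻¹ * u₂⁻¹ := by group
      _ = u₁ * (v₂⁻¹ * (b₂:G)⁻¹ * v₂) * (v₂⁻¹ * (b₂:G)⁻¹ * v₂)⁻¹ * u₂⁻¹ := by rw [key]
      _ = u₁ * u₂⁻¹ := by group
  rw [heq]
  exact hu

instance quandle (G : Type*) [Group G] (A : Set G) : Quandle (Q G A) where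
  act := Quotient.map₂ pinv (fun _ _ h _ _ h' => pinv_well _ _ _ _ h h')
  invAct := Quotient.map₂ pop (fun _ _ h _ _ h' => pop_well _ _ _ _ h h')
  self_distrib := by
    rintro ⟨⟨b,v⟩⟩ ⟨⟨c,w⟩⟩ ⟨⟨a,u⟩⟩
    refine Quotient.sound ⟨rfl, ?_⟩
    simp only [pinv]
    rw [centralizer_mem_iff]
    group
  left_inv := by
    rintro ⟨⟨b,v⟩⟩ ⟨⟨a,u⟩⟩
    refine Quotient.sound ⟨rfl, ?_⟩
    simp only [pop, pinv]
    rw [centralizer_mem_iff]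
    group
  right_inv := by
    rintro ⟨⟨b,v⟩⟩ ⟨⟨a,u⟩⟩
    refine Quotient.sound ⟨rfl, ?_⟩
    simp only [pop, pinv]
    rw [centralizer_mem_iff]
    group
  fix := by
    rintro ⟨⟨a,u⟩⟩
    refine Quotient.sound ⟨rfl, ?_⟩
    simp only [pinv]
    rw [centralizer_mem_iff]
    have : (u * u⁻¹ * (a:G)⁻¹ * u) * u⁻¹ = (a : G)⁻¹ := by group
    rw [this]
    group

@[simp] theorem invAct_mk {A : Set G} (a b : A) (u v : G) :
    Rack.invAct (mk b v) (mk a u) = mk a (u * v⁻¹ * (b : G) * v) := rfl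

@[simp] theorem act_mk {A : Set G} (a b : A) (u v : G) :
    Shelf.act (mk b v) (mk a u) = mk a (u * v⁻¹ * (b : G)⁻¹ * v) := rfl

end GA
open Quandles

/-- The underlying set of the quandle `U(n,m)`: elements `x_i` (`i ∈ ZMod n`)
and `y_r` (`r ∈ ZMod m`). -/
def UQ (n m : ℕ) : Type := ZMod n ⊕ ZMod m

namespace UQ

/-- The quandle operation of `U(n,m)` (as the inverse action `z ◃⁻¹ w = w * z` of the paper):
`x_i * x_j = x_i`, `x_i * y_r = x_{i+1}`, `y_r * y_s = y_r`, `y_r * x_i = y_{r+1}`. -/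
def op {n m : ℕ} (x y : UQ n m) : UQ n m :=
  match x, y with
  | Sum.inl _, Sum.inl i => Sum.inl i
  | Sum.inl _, Sum.inr r => Sum.inr (r + 1)
  | Sum.inr _, Sum.inl i => Sum.inl (i + 1)
  | Sum.inr _, Sum.inr r => Sum.inr r

/-- The inverse operation. -/
def opInv {n m : ℕ} (x y : UQ n m) : UQ n m :=
  match x, y with
  | Sum.inl _, Sum.inl i => Sum.inl i
  | Sum.inl _, Sum.inr r => Sum.inr (r - 1)
  | Sum.inr _, Sum.inl i => Sum.inl (i - 1)
  | Sum.inr _, Sum.inr r => Sum.inr r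

instance quandle (n m : ℕ) : Quandle (UQ n m) where
  act := opInv
  invAct := op
  self_distrib := by
    rintro (a | a) (b | b) (c | c) <;> simp [op, opInv] <;> rfl
  left_inv := by
    rintro (a | a) (b | b) <;> simp [op, opInv] <;> rfl
  right_inv := by
    rintro (a | a) (b | b) <;> simp [op, opInv] <;> rfl
  fix := by
    rintro (a | a) <;> simp [op, opInv] <;> rfl

/-- The element `x_i` of `U(n,m)`. -/
def x {n m : ℕ} (i : ZMod n) : UQ n m := Sum.inl i

/-- The element `y_r` of `U(n,m)`. -/
def y {n m : ℕ} (r : ZMod m) : UQ n m := Sum.inr r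

end UQ


theorem GA.act_fix_symm {G : Type*} [Group G] {A : Set G} (p q : GA.Q G A)
    (h : Shelf.act p q = q) : Shelf.act q p = p := by
  obtain ⟨⟨b, v⟩⟩ := p
  obtain ⟨⟨a, u⟩⟩ := q
  obtain ⟨-, hc⟩ := Quotient.exact h
  refine Quotient.sound ⟨rfl, ?_⟩
  rw [GA.centralizer_mem_iff] at hc ⊢
  have h1 : u * v⁻¹ * (b : G)⁻¹ * v * u⁻¹ * (a : G)
      = (a : G) * (u * v⁻¹ * (b : G)⁻¹ * v * u⁻¹) := hc
  have key : (b : G)⁻¹ * (v * u⁻¹ * (a : G) * u * v⁻¹)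
      = (v * u⁻¹ * (a : G) * u * v⁻¹) * (b : G)⁻¹ := by
    calc (b : G)⁻¹ * (v * u⁻¹ * (a : G) * u * v⁻¹)
        = v * u⁻¹ * (u * v⁻¹ * (b : G)⁻¹ * v * u⁻¹ * (a : G)) * u * v⁻¹ := by group
      _ = v * u⁻¹ * ((a : G) * (u * v⁻¹ * (b : G)⁻¹ * v * u⁻¹)) * u * v⁻¹ := by rw [h1]
      _ = (v * u⁻¹ * (a : G) * u * v⁻¹) * (b : G)⁻¹ := by group
  have h2 : Commute ((b : G)⁻¹) (v * u⁻¹ * (a : G) * u * v⁻¹) := key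
  have h3 := (h2.inv_left.inv_right).eq
  calc v * u⁻¹ * (a : G)⁻¹ * u * v⁻¹ * (b : G)
      = (v * u⁻¹ * (a : G) * u * v⁻¹)⁻¹ * ((b : G)⁻¹)⁻¹ := by group
    _ = ((b : G)⁻¹)⁻¹ * (v * u⁻¹ * (a : G) * u * v⁻¹)⁻¹ := h3.symm
    _ = (b : G) * (v * u⁻¹ * (a : G)⁻¹ * u * v⁻¹) := by group

/-- For `n ≥ 2`, the quandle `U(1,n)` (with elements `x = x 0` and `y_r = y r`)
satisfies `x * y_0 = x` but `y_0 * x ≠ y_0`; consequently `U(1,n)` is not isomorphic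
to any `(G,A)`-quandle. (Here `a * b` is the paper's quandle operation,
`Rack.invAct b a` in this encoding.) -/
theorem U1n_not_GA (n : ℕ) (hn : 2 ≤ n) :
    Rack.invAct (UQ.y 0 : UQ 1 n) (UQ.x 0) = UQ.x 0 ∧
    Rack.invAct (UQ.x 0 : UQ 1 n) (UQ.y 0) ≠ UQ.y 0 ∧
    ∀ (G : Type*) (_ : Group G) (A : Set G),
      ¬∃ f : UQ 1 n ≃ GA.Q G A,
        (∀ a b : UQ 1 n, f (Shelf.act a b) = Shelf.act (f a) (f b)) := by
  haveI : Fact (1 < n) := ⟨hn⟩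
  have h1 : (1 : ZMod n) ≠ 0 := one_ne_zero
  refine ⟨?_, ?_, ?_⟩
  · show UQ.op (UQ.y 0) (UQ.x 0) = UQ.x 0
    exact congrArg Sum.inl (Subsingleton.elim _ _)
  · show UQ.op (UQ.x 0) (UQ.y 0) ≠ UQ.y 0
    intro h
    have : (0 + 1 : ZMod n) = 0 := Sum.inr.inj h
    simp at this
  · rintro G _ A ⟨f, hf⟩
    have hxy : Shelf.act (UQ.y 0 : UQ 1 n) (UQ.x 0) = UQ.x 0 := by
      show UQ.opInv (UQ.y 0) (UQ.x 0) = UQ.x 0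
      exact congrArg Sum.inl (Subsingleton.elim _ _)
    have h2 : Shelf.act (f (UQ.y 0 : UQ 1 n)) (f (UQ.x 0)) = f (UQ.x 0) := by
      rw [← hf, hxy]
    have h3 := GA.act_fix_symm _ _ h2
    rw [← hf] at h3
    have h4 : Shelf.act (UQ.x 0 : UQ 1 n) (UQ.y 0) = UQ.y 0 := f.injective h3
    have : (0 - 1 : ZMod n) = 0 := Sum.inr.inj h4
    simp [sub_eq_zero] at this
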